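/- Let (D,K,1) be a YES-instance of MD-SPP with target T = 1. Then there exists a solution graph H of (D,K,1) such that every vertex incident to an edge of H is the source or the destination of some routed commodity in K. -/

import Mathlib

open Relation

variable {V : Type*} [DecidableEq V]

/-- The adjacency relation of a digraph given by its edge set. -/
def Adj (E : Finset (V × V)) : V → V → Prop := fun a b => (a, b) ∈ E

/-- `D` is a digraph: no self-loops (no parallel edges since edges form a set). -/
def IsDigraph (D : Finset (V × V)) : Prop := ∀ e ∈ D, e.1 ≠ e.2

/-- `l` is a directed `s`-`t`-path w.r.t. the adjacency relation `A`:
a nonempty duplicate-free list of vertices, consecutive ones adjacent,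
starting at `s` and ending at `t`. -/
def DiPath (A : V → V → Prop) (s t : V) (l : List V) : Prop :=
  l.Chain' A ∧ l.Nodup ∧ l.head? = some s ∧ l.getLast? = some t

/-- Adjacency in the transitive closure `T(D)` of the digraph with edge set `E`:
`(u,v)` is an edge iff `u ≠ v` and `v` is reachable from `u` in `E`. -/
def TCAdj (E : Finset (V × V)) (u v : V) : Prop :=
  u ≠ v ∧ Relation.ReflTransGen (Adj E) u v

/-- The outdegree of `v` in the digraph with edge set `H`. -/
def outDeg (H : Finset (V × V)) (v : V) : ℕ :=
  (H.filter fun e => e.1 = v).card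

/-- The list of (directed) edges traversed by a list of vertices. -/
def listEdges (l : List V) : List (V × V) := l.zip l.tail

/-- The routed commodities in `K` are valid: for `(s,t,P) ∈ K`,
`P` is a directed `s`-`t`-path in `D`. -/
def ValidSPP (D : Finset (V × V)) (K : Finset (V × V × List V)) : Prop :=
  ∀ k ∈ K, DiPath (Adj D) k.1 k.2.1 k.2.2

/-- `H` is a solution graph of the MD-SPP instance `(D,K,T)`: a subgraph of
`T(D)` of maximum outdegree at most `T` such that every routed commodity
`(s,t,P) ∈ K` has a directed `s`-`t`-path in `H ∩ T(P)`, i.e. an `s`-`t`-path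
whose edges are in `H` and whose vertices lie on `P` in the same order
(a sublist of `P`). -/
def SPPSolution (D : Finset (V × V)) (K : Finset (V × V × List V)) (T : ℕ)
    (H : Finset (V × V)) : Prop :=
  (∀ e ∈ H, TCAdj D e.1 e.2) ∧ (∀ v, outDeg H v ≤ T) ∧
  (∀ k ∈ K, ∃ l, DiPath (Adj H) k.1 k.2.1 l ∧ l.Sublist k.2.2)

section AuxLemmas

set_option linter.unusedSectionVars false

lemma mem_listEdges_iff_suffix {l : List V} {a b : V} :
    (a, b) ∈ listEdges l ↔ ∃ s, (a :: b :: s) <:+ l := by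
  induction l with
  | nil => simp [listEdges]
  | cons x xs ih =>
    cases xs with
    | nil =>
      simp only [listEdges, List.zip_nil_right, List.tail_cons, List.not_mem_nil, false_iff]
      rintro ⟨s, hs⟩
      have := hs.length_le
      simp at this
    | cons y ys =>
      have he : listEdges (x :: y :: ys) = (x, y) :: listEdges (y :: ys) := rfl
      rw [he, List.mem_cons, ih]
      constructor
      · rintro (h | ⟨s, hs⟩)
        · have hab : a = x ∧ b = y := by
            have := Prod.mk.injEq a b x y ▸ h
            simpa using this
          exact ⟨ys, hab.1 ▸ hab.2 ▸ List.suffix_refl _⟩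
        · exact ⟨s, hs.trans (List.suffix_cons x (y :: ys))⟩
      · rintro ⟨s, hs⟩
        rcases List.suffix_cons_iff.mp hs with h | h
        · left
          simp only [List.cons.injEq] at h
          rw [h.1, h.2.1]
        · exact Or.inr ⟨s, h⟩

lemma head?_of_prefix {l1 l2 : List V} (h : l1 <+: l2) (hne : l1 ≠ []) :
    l2.head? = l1.head? := by
  cases l1 with
  | nil => exact absurd rfl hne
  | cons a t =>
    cases l2 with
    | nil => simpa using h.length_le
    | cons b t' => rw [List.cons_prefix_cons] at h; simp [h.1]

lemma suffix_filter_lift {p : V → Bool} {l u : List V} (h : u <:+ l.filter p) :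
    ∃ t, t <:+ l ∧ t.filter p = u := by
  induction l with
  | nil =>
    rw [List.filter_nil] at h
    exact ⟨[], List.nil_suffix, (List.suffix_nil.mp h).symm⟩
  | cons x xs ih =>
    by_cases hx : p x
    · rw [List.filter_cons_of_pos hx] at h
      rcases List.suffix_cons_iff.mp h with h | h
      · exact ⟨x :: xs, List.suffix_refl _, by rw [List.filter_cons_of_pos hx, h]⟩
      · obtain ⟨t, ht, rfl⟩ := ih h
        exact ⟨t, ht.trans (List.suffix_cons x xs), rfl⟩
    · rw [List.filter_cons_of_neg hx] at h
      obtain ⟨t, ht, rfl⟩ := ih h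
      exact ⟨t, ht.trans (List.suffix_cons x xs), rfl⟩

lemma chain_prefix_total {R : V → V → Prop}
    (hfun : ∀ a b c, R a b → R a c → b = c) (u u' : List V)
    (hc : u.Chain' R) (hc' : u'.Chain' R) (hh : u.head? = u'.head?) :
    u <+: u' ∨ u' <+: u := by
  induction u generalizing u' with
  | nil => exact Or.inl (List.nil_prefix)
  | cons a t ih =>
    cases u' with
    | nil => exact Or.inr (List.nil_prefix)
    | cons a' t' =>
      simp only [List.head?_cons, Option.some.injEq] at hh
      subst hh
      cases t with
      | nil => exact Or.inl (List.cons_prefix_cons.mpr ⟨rfl, List.nil_prefix⟩)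
      | cons b r =>
        cases t' with
        | nil => exact Or.inr (List.cons_prefix_cons.mpr ⟨rfl, List.nil_prefix⟩)
        | cons b' r' =>
          rw [List.Chain', List.isChain_cons_cons] at hc hc'
          have hb : b = b' := hfun a b b' hc.1 hc'.1
          subst hb
          rcases ih (b :: r') hc.2 hc'.2 rfl with h | h
          · exact Or.inl (List.cons_prefix_cons.mpr ⟨rfl, h⟩)
          · exact Or.inr (List.cons_prefix_cons.mpr ⟨rfl, h⟩)

lemma chain'_consec (m : List V) : m.Chain' (fun a b => ∃ s, (a :: b :: s) <:+ m) := by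
  have : ∀ m' : List V, m' <:+ m → m'.Chain' (fun a b => ∃ s, (a :: b :: s) <:+ m) := by
    intro m'
    induction m' with
    | nil => intro; exact List.isChain_nil
    | cons a t ih =>
      intro hs
      cases t with
      | nil => exact List.isChain_singleton a
      | cons b r =>
        rw [List.Chain', List.isChain_cons_cons]
        exact ⟨⟨r, hs⟩, ih ((List.suffix_cons a (b :: r)).trans hs)⟩
  exact this m (List.suffix_refl m)

lemma filter_head_after {p : V → Bool} {l : List V} {v w : V} {s : List V}
    (hn : l.Nodup) (h : (v :: w :: s) <:+ l.filter p) :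
    ∃ t, (v :: t) <:+ l ∧ (t.filter p).head? = some w := by
  obtain ⟨t', ht', hft⟩ := suffix_filter_lift h
  have hvmem : v ∈ t'.filter p := hft ▸ List.mem_cons_self
  have hpv : p v := (List.mem_filter.mp hvmem).2
  obtain ⟨t1, t2, rfl⟩ := List.append_of_mem (List.mem_filter.mp hvmem).1
  have hnod : (t1 ++ v :: t2).Nodup := hn.sublist ht'.sublist
  rw [List.filter_append, List.filter_cons_of_pos hpv] at hft
  have ht1 : t1.filter p = [] := by
    rcases hf : t1.filter p with _ | ⟨x, r⟩
    · rfl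
    · exfalso
      rw [hf] at hft
      have hx : x = v := by
        have := congrArg List.head? hft
        simpa using this
      subst hx
      have : x ∈ t1 := List.mem_of_mem_filter (hf ▸ List.mem_cons_self : x ∈ t1.filter p)
      exact (List.disjoint_of_nodup_append hnod) this List.mem_cons_self
  rw [ht1, List.nil_append] at hft
  refine ⟨t2, (List.suffix_append t1 (v :: t2)).trans ht', ?_⟩
  have := congrArg List.tail hft
  simp at this
  rw [this]
  rfl

lemma next_unique {H : Finset (V × V)}
    (hfun : ∀ a b c : V, (a, b) ∈ H → (a, c) ∈ H → b = c)
    {p : V → Bool} {l l' : List V}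
    (hl : l.Chain' (Adj H)) (hl' : l'.Chain' (Adj H))
    (hn : l.Nodup) (hn' : l'.Nodup) {v w w' : V} {s s' : List V}
    (h : (v :: w :: s) <:+ l.filter p) (h' : (v :: w' :: s') <:+ l'.filter p) :
    w = w' := by
  obtain ⟨t, ht, hw⟩ := filter_head_after hn h
  obtain ⟨t', ht', hw'⟩ := filter_head_after hn' h'
  have hc : (v :: t).Chain' (Adj H) := hl.suffix ht
  have hc' : (v :: t').Chain' (Adj H) := hl'.suffix ht'
  have hfun' : ∀ a b c : V, Adj H a b → Adj H a c → b = c := fun a b c => hfun a b c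
  have hne : t.filter p ≠ [] := by intro hh; rw [hh] at hw; simp at hw
  have hne' : t'.filter p ≠ [] := by intro hh; rw [hh] at hw'; simp at hw'
  rcases chain_prefix_total hfun' (v :: t) (v :: t') hc hc' rfl with hpre | hpre
  · have hpf := List.IsPrefix.filter p (List.cons_prefix_cons.mp hpre).2
    have heq := head?_of_prefix hpf hne
    rw [hw, hw'] at heq
    exact (Option.some.inj heq).symm
  · have hpf := List.IsPrefix.filter p (List.cons_prefix_cons.mp hpre).2
    have heq := head?_of_prefix hpf hne'
    rw [hw, hw'] at heq
    exact Option.some.inj heq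

lemma head?_filter {p : V → Bool} {l : List V} {t : V}
    (h : l.head? = some t) (hp : p t) : (l.filter p).head? = some t := by
  cases l with
  | nil => simp at h
  | cons a r =>
    simp only [List.head?_cons, Option.some.injEq] at h
    subst h
    rw [List.filter_cons_of_pos hp]
    rfl

lemma getLast?_filter {p : V → Bool} {l : List V} {t : V}
    (h : l.getLast? = some t) (hp : p t) : (l.filter p).getLast? = some t := by
  rw [← List.head?_reverse] at h ⊢
  rw [← List.filter_reverse]
  exact head?_filter h hp

end AuxLemmas

/-- If `(D,K,1)` is a YES-instance of MD-SPP with target `1`,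
then there is a solution graph `H` of `(D,K,1)` such that every vertex incident
to an edge of `H` is the source or the destination of some routed commodity. -/
theorem mdspp_target_one_endpoints_only {V : Type*} [Fintype V] [DecidableEq V]
    (D : Finset (V × V)) (K : Finset (V × V × List V))
    (hD : IsDigraph D) (hKvalid : ValidSPP D K)
    (hyes : ∃ H : Finset (V × V), SPPSolution D K 1 H) :
    ∃ H : Finset (V × V), SPPSolution D K 1 H ∧
      ∀ v : V, (∃ e ∈ H, e.1 = v ∨ e.2 = v) →
        ∃ k ∈ K, k.1 = v ∨ k.2.1 = v := by
  classical
  obtain ⟨H, hTC, hdeg, hpaths⟩ := hyes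
  -- `H` is functional: each vertex has at most one out-neighbor.
  have hfun : ∀ a b c : V, (a, b) ∈ H → (a, c) ∈ H → b = c := by
    intro a b c hb hc
    have h1 : (H.filter fun e => e.1 = a).card ≤ 1 := hdeg a
    have := Finset.card_le_one.mp h1 (a, b) (Finset.mem_filter.mpr ⟨hb, rfl⟩)
      (a, c) (Finset.mem_filter.mpr ⟨hc, rfl⟩)
    exact congrArg Prod.snd this
  -- the endpoint predicate
  set p : V → Bool := fun v => decide (∃ k ∈ K, k.1 = v ∨ k.2.1 = v) with hp
  -- choose a path for each commodity
  choose! f hf1 hf2 using hpaths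
  set H' : Finset (V × V) :=
    K.biUnion (fun k => (listEdges ((f k).filter p)).toFinset) with hH'
  have memH' : ∀ e : V × V, e ∈ H' ↔ ∃ k ∈ K, e ∈ listEdges ((f k).filter p) := by
    intro e; simp [hH']
  -- basic facts about an edge of `H'`
  have edge_suffix : ∀ u w : V, (u, w) ∈ H' →
      ∃ k ∈ K, ∃ s, (u :: w :: s) <:+ (f k).filter p := by
    intro u w hmem
    obtain ⟨k, hk, hmem⟩ := (memH' (u, w)).mp hmem
    obtain ⟨s, hs⟩ := mem_listEdges_iff_suffix.mp hmem
    exact ⟨k, hk, s, hs⟩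
  have pmem : ∀ v : V, p v = true → ∃ k ∈ K, k.1 = v ∨ k.2.1 = v := by
    intro v hv
    rw [hp] at hv
    exact of_decide_eq_true hv
  refine ⟨H', ⟨?_, ?_, ?_⟩, ?_⟩
  · -- edges of `H'` are in the transitive closure of `D`
    rintro ⟨u, w⟩ he
    obtain ⟨k, hk, s, hs⟩ := edge_suffix u w he
    obtain ⟨hchain, hnodup, _, _⟩ := hf1 k hk
    have hsub : List.Sublist [u, w] (f k) :=
      (List.cons_sublist_cons.mpr (List.cons_sublist_cons.mpr (List.nil_sublist s))).trans
        ((hs.sublist).trans List.filter_sublist)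
    constructor
    · have : ([u, w] : List V).Nodup := hnodup.sublist hsub
      simpa using this
    · have hchain' : (f k).Chain' (ReflTransGen (Adj D)) :=
        hchain.imp fun a b hab => (hTC (a, b) hab).2
      have := hchain'.sublist hsub
      exact (List.isChain_cons_cons.mp this).1
  · -- outdegree at most one
    intro v
    apply Finset.card_le_one.mpr
    rintro ⟨u1, w1⟩ h1 ⟨u2, w2⟩ h2
    rw [Finset.mem_filter] at h1 h2
    obtain ⟨h1, rfl⟩ := h1
    obtain ⟨h2, (rfl : u2 = u1)⟩ := h2
    obtain ⟨k1, hk1, s1, hs1⟩ := edge_suffix _ _ h1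
    obtain ⟨k2, hk2, s2, hs2⟩ := edge_suffix _ _ h2
    have := next_unique hfun (hf1 k1 hk1).1 (hf1 k2 hk2).1
      (hf1 k1 hk1).2.1 (hf1 k2 hk2).2.1 hs1 hs2
    rw [this]
  · -- every commodity is routed
    intro k hk
    obtain ⟨hchain, hnodup, hhead, hlast⟩ := hf1 k hk
    refine ⟨(f k).filter p, ⟨?_, hnodup.filter p, ?_, ?_⟩,
      ((f k).filter_sublist).trans (hf2 k hk)⟩
    · exact (chain'_consec ((f k).filter p)).imp fun a b ⟨s, hs⟩ =>
        (memH' (a, b)).mpr ⟨k, hk, mem_listEdges_iff_suffix.mpr ⟨s, hs⟩⟩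
    · exact head?_filter hhead (by rw [hp]; exact decide_eq_true ⟨k, hk, Or.inl rfl⟩)
    · exact getLast?_filter hlast (by rw [hp]; exact decide_eq_true ⟨k, hk, Or.inr rfl⟩)
  · -- every vertex of `H'` is an endpoint of a commodity
    rintro v ⟨⟨u, w⟩, he, hv⟩
    obtain ⟨k, hk, s, hs⟩ := edge_suffix u w he
    have hu : u ∈ (f k).filter p := hs.subset List.mem_cons_self
    have hw : w ∈ (f k).filter p :=
      hs.subset (List.mem_cons_of_mem _ List.mem_cons_self)
    rcases hv with rfl | rfl
    · exact pmem _ (List.mem_filter.mp hu).2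
    · exact pmem _ (List.mem_filter.mp hw).2
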